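/- Let G be a noncomplete connected graph of order n. Then con(G) = n − 1 if and only if G contains a simplicial vertex. -/

import Mathlib

open SimpleGraph

/-- The complementary prism `G ∘ Ḡ`: left copies (`Sum.inl`) form `G`,
right copies (`Sum.inr`) form the complement `Gᶜ`, and each `inl v` is
matched to `inr v`. -/
def compPrism {V : Type*} (G : SimpleGraph V) : SimpleGraph (V ⊕ V) where
  Adj x y :=
    match x, y with
    | Sum.inl a, Sum.inl b => G.Adj a b
    | Sum.inr a, Sum.inr b => Gᶜ.Adj a b
    | Sum.inl a, Sum.inr b => a = b
    | Sum.inr a, Sum.inl b => a = b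
  symm := by
    refine ⟨?_⟩
    rintro (a | a) (b | b) h <;> simp_all [compl_adj, adj_comm, eq_comm]
  loopless := by
    refine ⟨?_⟩
    rintro (a | a) h <;> simp_all

/-- `v` lies on some shortest `u`-`w` path in `G`. -/
def inInterval {V : Type*} (G : SimpleGraph V) (u w v : V) : Prop :=
  ∃ p : G.Walk u w, p.IsPath ∧ p.length = G.dist u w ∧ v ∈ p.support

/-- A set is geodesically convex if it contains every vertex on any shortest
path between two of its vertices. -/
def IsGeodConvex {V : Type*} (G : SimpleGraph V) (S : Set V) : Prop :=
  ∀ u ∈ S, ∀ w ∈ S, ∀ v, inInterval G u w v → v ∈ S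

/-- The geodesic convex hull of a set of vertices. -/
def geodHull {V : Type*} (G : SimpleGraph V) (S : Set V) : Set V :=
  ⋂₀ {T | S ⊆ T ∧ IsGeodConvex G T}

lemma walk_exists_cons {V : Type*} {G : SimpleGraph V} {v w : V} (p : G.Walk v w) (h : v ≠ w) :
    ∃ (a : V) (ha : G.Adj v a) (t : G.Walk a w), p = SimpleGraph.Walk.cons ha t := by
  cases p with
  | nil => exact absurd rfl h
  | cons ha t => exact ⟨_, ha, t, rfl⟩

lemma simplicial_convex {V : Type*} {G : SimpleGraph V} {v : V}
    (hs : G.IsClique (G.neighborSet v)) : IsGeodConvex G (Set.univ \ {v}) := by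
  classical
  rintro u hu w hw x ⟨p, hp, hlen, hx⟩
  refine ⟨trivial, ?_⟩
  rintro (rfl : x = v)
  have huv : u ≠ x := fun h => hu.2 (by simp [h])
  have hwv : w ≠ x := fun h => hw.2 (by simp [h])
  set q := p.takeUntil x hx with hq
  set r := p.dropUntil x hx with hr
  have hspec : q.append r = p := p.take_spec hx
  obtain ⟨a, ha, tq, htq⟩ := walk_exists_cons q.reverse (Ne.symm huv)
  obtain ⟨b, hb, tr, htr⟩ := walk_exists_cons r hwv.symm
  -- a ≠ b from nodup support of p
  have hnodup : (q.append r).support.Nodup := by rw [hspec]; exact hp.support_nodup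
  rw [Walk.support_append, List.nodup_append] at hnodup
  have haq : a ∈ q.support := by
    have : a ∈ q.reverse.support := by rw [htq]; simp [Walk.support_cons]
    simpa using this
  have hbr : b ∈ r.support.tail := by
    rw [htr]; simp [Walk.support_cons]
  have hab : a ≠ b := fun h => hnodup.2.2 a haq b hbr h
  have hadj : G.Adj a b := hs (by simpa using ha) (by simpa using hb) hab
  -- build shorter walk
  have huA : G.Walk u a := tq.reverse
  let w2 : G.Walk u w := tq.reverse.append (Walk.cons hadj tr)
  have hlen2 : w2.length + 1 = p.length := by
    have h1 : q.length = tq.length + 1 := by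
      have := congrArg Walk.length htq
      simpa [Walk.length_reverse] using this
    have h2 : r.length = tr.length + 1 := by
      have := congrArg Walk.length htr
      simpa using this
    have h3 : q.length + r.length = p.length := by
      have := congrArg Walk.length hspec
      simpa [Walk.length_append] using this
    simp only [w2, Walk.length_append, Walk.length_cons, Walk.length_reverse]
    omega
  have := G.dist_le w2
  omega

/-- The convexity number: the maximum cardinality of a proper convex set. -/
noncomputable def convexityNumber {V : Type*} (G : SimpleGraph V) : ℕ :=
  sSup {n | ∃ S : Set V, IsGeodConvex G S ∧ S ≠ Set.univ ∧ S.ncard = n}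

theorem stmt9 {V : Type*} [Fintype V] (G : SimpleGraph V)
    (hconn : G.Connected) (hnc : G ≠ ⊤) :
    convexityNumber G = Fintype.card V - 1 ↔
      ∃ v : V, G.IsClique (G.neighborSet v) := by
  classical
  set T := {n | ∃ S : Set V, IsGeodConvex G S ∧ S ≠ Set.univ ∧ S.ncard = n} with hT
  have hub : ∀ m ∈ T, m ≤ Fintype.card V - 1 := by
    rintro m ⟨S, _, hSne, rfl⟩
    have hlt : S.ncard < (Set.univ : Set V).ncard :=
      Set.ncard_lt_ncard (Set.ssubset_univ_iff.mpr hSne) (Set.finite_univ)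
    rw [Set.ncard_univ, Nat.card_eq_fintype_card] at hlt
    omega
  -- non-adjacent pair
  have hex : ∃ u w : V, u ≠ w ∧ ¬G.Adj u w := by
    by_contra h
    push_neg at h
    apply hnc
    ext u w
    simp only [top_adj]
    exact ⟨fun ha => ha.ne, fun hne => h u w hne⟩
  obtain ⟨u, w, huw, hnadj⟩ := hex
  have hdist2 : 2 ≤ G.dist u w := by
    have h0 : G.dist u w ≠ 0 := by
      simp [hconn.dist_eq_zero_iff, huw]
    have h1 : G.dist u w ≠ 1 := fun h => hnadj (dist_eq_one_iff_adj.mp h)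
    omega
  have hcard3 : 3 ≤ Fintype.card V := by
    obtain ⟨p, hp, hlen⟩ := hconn.exists_path_of_dist u w
    have := hp.support_nodup.length_le_card
    rw [Walk.length_support] at this
    omega
  constructor
  · intro h
    have hTne : T.Nonempty := by
      by_contra hne
      rw [Set.not_nonempty_iff_eq_empty] at hne
      rw [convexityNumber, ← hT, hne, csSup_empty] at h
      simp at h
      omega
    have hmem : Fintype.card V - 1 ∈ T := by
      rw [← h]
      exact Nat.sSup_mem hTne ⟨Fintype.card V - 1, hub⟩
    obtain ⟨S, hSconv, hSne, hScard⟩ := hmem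
    obtain ⟨v, hv⟩ : ∃ v, v ∉ S := by
      by_contra h'
      push_neg at h'
      exact hSne (Set.eq_univ_of_forall h')
    have hSeq : S = Set.univ \ {v} := by
      apply Set.eq_of_subset_of_ncard_le
      · intro x hx
        exact ⟨trivial, fun hxv => hv (by rwa [Set.mem_singleton_iff.mp hxv] at hx)⟩
      · rw [hScard, Set.ncard_diff_singleton_of_mem (Set.mem_univ v), Set.ncard_univ,
          Nat.card_eq_fintype_card]
      · exact Set.finite_univ.diff
    refine ⟨v, ?_⟩
    intro a ha b hb hab
    by_contra hnadj'
    have hva : G.Adj v a := ha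
    have hvb : G.Adj v b := hb
    have hdistab : G.dist a b = 2 := by
      have hle : G.dist a b ≤ 2 :=
        G.dist_le (Walk.cons hva.symm (Walk.cons hvb (Walk.nil)))
      have h0 : G.dist a b ≠ 0 := by simp [hconn.dist_eq_zero_iff, hab]
      have h1 : G.dist a b ≠ 1 := fun h => hnadj' (dist_eq_one_iff_adj.mp h)
      omega
    have hpath : (Walk.cons hva.symm (Walk.cons hvb (Walk.nil : G.Walk b b))).IsPath := by
      simp [Walk.isPath_def, hva.ne', hvb.ne, hab]
    have hvS : v ∈ S := by
      refine hSconv a ?_ b ?_ v ⟨_, hpath, by simp [hdistab], by simp⟩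
      · rw [hSeq]; exact ⟨trivial, by simp [hva.ne']⟩
      · rw [hSeq]; exact ⟨trivial, by simp [hvb.ne']⟩
    exact hv hvS
  · rintro ⟨v, hsimp⟩
    have hmem : Fintype.card V - 1 ∈ T := by
      refine ⟨Set.univ \ {v}, simplicial_convex hsimp, ?_, ?_⟩
      · intro h
        have : v ∈ Set.univ \ {v} := by rw [h]; trivial
        exact this.2 rfl
      · rw [Set.ncard_diff_singleton_of_mem (Set.mem_univ v), Set.ncard_univ,
          Nat.card_eq_fintype_card]
    exact le_antisymm (csSup_le ⟨_, hmem⟩ hub) (le_csSup ⟨Fintype.card V - 1, hub⟩ hmem)
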